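/- Let R₀, R₁ ∈ S^d and let d̄∈[0,1) satisfy ‖R₀‖ ≤ d̄ and ‖R₁‖ ≤ d̄. Then −ln det(I−R₁) ≤ −ln det(I−R₀) + Tr(R₁−R₀) + (D/(1−d̄))·‖R₁−R₀‖_F, where D = max(‖R₀‖_F, ‖R₁‖_F). -/

import Mathlib

open Matrix Real

noncomputable section

/-- Frobenius norm of a matrix. -/
def frobNorm {d : ℕ} (A : Matrix (Fin d) (Fin d) ℝ) : ℝ :=
  Real.sqrt (∑ i, ∑ j, (A i j) ^ 2)

/-- Spectral norm of a matrix. -/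
def specNorm {d : ℕ} (A : Matrix (Fin d) (Fin d) ℝ) : ℝ :=
  ‖Matrix.toEuclideanCLM (𝕜 := ℝ) A‖


namespace Statement6Aux

variable {d : ℕ} {V : Matrix (Fin d) (Fin d) ℝ}

lemma eig_abs_le {A : Matrix (Fin d) (Fin d) ℝ} (hA : A.IsHermitian) (i : Fin d) :
    |hA.eigenvalues i| ≤ specNorm A := by
  have hne : Nonempty (Fin d) := ⟨i⟩
  have hnt : Nontrivial (EuclideanSpace ℝ (Fin d)) :=
    inferInstance
  have h1 : hA.eigenvalues i ∈ spectrum ℝ (Matrix.toEuclideanCLM (𝕜 := ℝ) A) := by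
    rw [AlgEquiv.spectrum_eq]
    exact hA.eigenvalues_mem_spectrum_real i
  have h2 := spectrum.norm_le_norm_of_mem h1
  simpa [Real.norm_eq_abs, specNorm] using h2

lemma trace_conj (hV2 : Vᴴ * V = 1) (v : Fin d → ℝ) :
    (V * diagonal v * Vᴴ).trace = ∑ i, v i := by
  rw [Matrix.trace_mul_cycle, hV2, Matrix.one_mul, Matrix.trace_diagonal]

lemma det_conj (hV1 : V * Vᴴ = 1) (v : Fin d → ℝ) :
    (V * diagonal v * Vᴴ).det = ∏ i, v i := by
  have h : V.det * Vᴴ.det = 1 := by rw [← Matrix.det_mul, hV1, Matrix.det_one]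
  rw [Matrix.det_mul, Matrix.det_mul, Matrix.det_diagonal]
  linear_combination (∏ i, v i) * h

lemma conj_mul_conj (hV2 : Vᴴ * V = 1) (v w : Fin d → ℝ) :
    (V * diagonal v * Vᴴ) * (V * diagonal w * Vᴴ) = V * diagonal (fun i => v i * w i) * Vᴴ := by
  have h : Vᴴ * (V * (diagonal w * Vᴴ)) = diagonal w * Vᴴ := by
    rw [← Matrix.mul_assoc, hV2, Matrix.one_mul]
  simp only [Matrix.mul_assoc, h]
  rw [← Matrix.mul_assoc (diagonal v), Matrix.diagonal_mul_diagonal]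

lemma conj_herm (v : Fin d → ℝ) : (V * diagonal v * Vᴴ).IsHermitian := by
  unfold Matrix.IsHermitian
  simp [Matrix.conjTranspose_mul, Matrix.diagonal_conjTranspose, Matrix.mul_assoc]

lemma frobSq_eq (A : Matrix (Fin d) (Fin d) ℝ) :
    (Aᵀ * A).trace = ∑ i, ∑ j, (A i j) ^ 2 := by
  rw [Finset.sum_comm]
  simp [Matrix.trace, Matrix.mul_apply, Matrix.diag, sq]

lemma frobNorm_conj (hV2 : Vᴴ * V = 1) (v : Fin d → ℝ) :
    frobNorm (V * diagonal v * Vᴴ) = Real.sqrt (∑ i, v i ^ 2) := by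
  have hh := conj_herm (V := V) v
  have ht : ((V * diagonal v * Vᴴ)ᵀ * (V * diagonal v * Vᴴ)).trace = ∑ i, v i ^ 2 := by
    rw [← Matrix.conjTranspose_eq_transpose_of_trivial, hh, conj_mul_conj hV2,
      trace_conj hV2]
    simp [sq]
  rw [frobNorm, ← frobSq_eq, ht]

lemma posDef_conj' {A B : Matrix (Fin d) (Fin d) ℝ} (hA : A.PosDef) (hB : IsUnit B.det) :
    (Bᴴ * A * B).PosDef := by
  refine Matrix.PosDef.of_dotProduct_mulVec_pos
    (Matrix.isHermitian_conjTranspose_mul_mul B hA.isHermitian) fun x hx => ?_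
  have hx' : B *ᵥ x ≠ 0 := by
    intro h
    apply hx
    have : B⁻¹ *ᵥ (B *ᵥ x) = x := by
      rw [Matrix.mulVec_mulVec, Matrix.nonsing_inv_mul _ hB, Matrix.one_mulVec]
    rw [h, Matrix.mulVec_zero] at this
    exact this.symm
  simpa only [star_mulVec, dotProduct_mulVec, vecMul_vecMul] using hA.dotProduct_mulVec_pos hx'

lemma posDef_conj (hV1 : V * Vᴴ = 1) {v : Fin d → ℝ} (hv : ∀ i, 0 < v i) :
    (V * diagonal v * Vᴴ).PosDef := by
  have hdet : IsUnit (Vᴴ).det := by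
    apply IsUnit.of_mul_eq_one V.det
    rw [mul_comm, ← Matrix.det_mul, hV1, Matrix.det_one]
  have hD : (diagonal v).PosDef := by
    rw [Matrix.posDef_diagonal_iff]
    exact hv
  have := posDef_conj' hD hdet
  rwa [Matrix.conjTranspose_conjTranspose] at this

lemma spectral_decomp {A : Matrix (Fin d) (Fin d) ℝ} (hA : A.IsHermitian) :
    A = (hA.eigenvectorUnitary : Matrix (Fin d) (Fin d) ℝ) * diagonal hA.eigenvalues *
      (hA.eigenvectorUnitary : Matrix (Fin d) (Fin d) ℝ)ᴴ := by
  have := hA.spectral_theorem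
  simpa [Matrix.star_eq_conjTranspose] using this

lemma unitary_VVh {A : Matrix (Fin d) (Fin d) ℝ} (hA : A.IsHermitian) :
    (hA.eigenvectorUnitary : Matrix (Fin d) (Fin d) ℝ) *
      (hA.eigenvectorUnitary : Matrix (Fin d) (Fin d) ℝ)ᴴ = 1 := by
  simpa [Matrix.star_eq_conjTranspose] using
    (Matrix.mem_unitaryGroup_iff).mp hA.eigenvectorUnitary.2

lemma unitary_VhV {A : Matrix (Fin d) (Fin d) ℝ} (hA : A.IsHermitian) :
    (hA.eigenvectorUnitary : Matrix (Fin d) (Fin d) ℝ)ᴴ *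
      (hA.eigenvectorUnitary : Matrix (Fin d) (Fin d) ℝ) = 1 := by
  simpa [Matrix.star_eq_conjTranspose] using
    (Matrix.mem_unitaryGroup_iff').mp hA.eigenvectorUnitary.2

lemma trace_eq_sum_eig {A : Matrix (Fin d) (Fin d) ℝ} (hA : A.IsHermitian) :
    A.trace = ∑ i, hA.eigenvalues i := by
  conv_lhs => rw [spectral_decomp hA]
  exact trace_conj (unitary_VhV hA) _

lemma logdet_le_trace {M : Matrix (Fin d) (Fin d) ℝ} (hM : M.PosDef) :
    Real.log M.det ≤ M.trace - d := by
  have hh := hM.isHermitian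
  have hpos : ∀ i, 0 < hh.eigenvalues i := hM.eigenvalues_pos
  have hdet : M.det = ∏ i, hh.eigenvalues i := by
    simpa using hh.det_eq_prod_eigenvalues
  have htr : M.trace = ∑ i, hh.eigenvalues i := trace_eq_sum_eig hh
  rw [hdet, htr, Real.log_prod (fun i _ => (hpos i).ne')]
  have : ∑ i, Real.log (hh.eigenvalues i) ≤ ∑ i, (hh.eigenvalues i - 1) :=
    Finset.sum_le_sum fun i _ => Real.log_le_sub_one_of_pos (hpos i)
  simpa [Finset.sum_sub_distrib] using this

lemma trace_mul_le_frob {C Δ : Matrix (Fin d) (Fin d) ℝ} (hC : Cᵀ = C) :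
    (C * Δ).trace ≤ frobNorm C * frobNorm Δ := by
  have hsym : ∀ i j, C i j = C j i := fun i j => by
    have := congr_fun (congr_fun hC j) i
    simpa [Matrix.transpose_apply] using this
  have htr : (C * Δ).trace = ∑ p : Fin d × Fin d, C p.2 p.1 * Δ p.2 p.1 := by
    rw [Fintype.sum_prod_type]
    calc (C * Δ).trace = ∑ i, ∑ j, C i j * Δ j i := by
          simp [Matrix.trace, Matrix.diag, Matrix.mul_apply]
      _ = ∑ i, ∑ j, C j i * Δ j i :=
          Finset.sum_congr rfl fun i _ => Finset.sum_congr rfl fun j _ => by rw [hsym i j]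
  have cs := Finset.sum_mul_sq_le_sq_mul_sq Finset.univ
    (fun p : Fin d × Fin d => C p.2 p.1) (fun p : Fin d × Fin d => Δ p.2 p.1)
  have h1 : ∑ p : Fin d × Fin d, C p.2 p.1 ^ 2 = ∑ i, ∑ j, C i j ^ 2 := by
    rw [Fintype.sum_prod_type]
    exact Finset.sum_comm
  have h2 : ∑ p : Fin d × Fin d, Δ p.2 p.1 ^ 2 = ∑ i, ∑ j, Δ i j ^ 2 := by
    rw [Fintype.sum_prod_type]
    exact Finset.sum_comm
  rw [h1, h2] at cs
  calc (C * Δ).trace ≤ |(C * Δ).trace| := le_abs_self _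
    _ = Real.sqrt ((C * Δ).trace ^ 2) := (Real.sqrt_sq_eq_abs _).symm
    _ ≤ Real.sqrt ((∑ i, ∑ j, C i j ^ 2) * (∑ i, ∑ j, Δ i j ^ 2)) := by
        apply Real.sqrt_le_sqrt
        rw [htr]
        exact cs
    _ = frobNorm C * frobNorm Δ := by
        rw [frobNorm, frobNorm, ← Real.sqrt_mul]
        positivity

end Statement6Aux

namespace Statement6Aux

variable {d : ℕ} {V : Matrix (Fin d) (Fin d) ℝ}

lemma one_eq_conj (hV1 : V * Vᴴ = 1) :
    (1 : Matrix (Fin d) (Fin d) ℝ) = V * diagonal (fun _ => (1:ℝ)) * Vᴴ := by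
  rw [Matrix.diagonal_one, Matrix.mul_one, hV1]

lemma conj_sub (v w : Fin d → ℝ) :
    V * diagonal v * Vᴴ - V * diagonal w * Vᴴ = V * diagonal (fun i => v i - w i) * Vᴴ := by
  rw [← Matrix.sub_mul, ← Matrix.mul_sub]
  congr 2
  ext i j
  rcases eq_or_ne i j with h | h <;>
    simp [Matrix.sub_apply, Matrix.diagonal_apply, h]

lemma one_sub_decomp {A : Matrix (Fin d) (Fin d) ℝ} (hA : A.IsHermitian) :
    1 - A = (hA.eigenvectorUnitary : Matrix (Fin d) (Fin d) ℝ) *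
      diagonal (fun i => 1 - hA.eigenvalues i) *
      (hA.eigenvectorUnitary : Matrix (Fin d) (Fin d) ℝ)ᴴ := by
  calc 1 - A = (hA.eigenvectorUnitary : Matrix (Fin d) (Fin d) ℝ) *
        diagonal (fun _ => (1:ℝ)) * (hA.eigenvectorUnitary : Matrix (Fin d) (Fin d) ℝ)ᴴ -
        (hA.eigenvectorUnitary : Matrix (Fin d) (Fin d) ℝ) * diagonal hA.eigenvalues *
        (hA.eigenvectorUnitary : Matrix (Fin d) (Fin d) ℝ)ᴴ := by
        rw [← one_eq_conj (unitary_VVh hA), ← spectral_decomp hA]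
    _ = _ := conj_sub _ _

lemma posDef_one_sub {A : Matrix (Fin d) (Fin d) ℝ} (hA : A.IsHermitian)
    (h : ∀ i, hA.eigenvalues i < 1) : (1 - A).PosDef := by
  rw [one_sub_decomp hA]
  exact posDef_conj (unitary_VVh hA) (fun i => by linarith [h i])

end Statement6Aux

open Statement6Aux

/-- for symmetric `R₀, R₁` with spectral norms `≤ d̄ < 1`,
`−ln det(I−R₁) ≤ −ln det(I−R₀) + Tr(R₁−R₀) + (D/(1−d̄))·‖R₁−R₀‖_F`,
where `D = max (frobNorm R₀) (frobNorm R₁)`. -/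
theorem statement6 {d : ℕ} (R₀ R₁ : Matrix (Fin d) (Fin d) ℝ)
    (hR₀sym : R₀.IsSymm) (hR₁sym : R₁.IsSymm)
    (dbar : ℝ) (hd0 : 0 ≤ dbar) (hd1 : dbar < 1)
    (hR₀ : specNorm R₀ ≤ dbar) (hR₁ : specNorm R₁ ≤ dbar) :
    -Real.log ((1 - R₁).det) ≤
      -Real.log ((1 - R₀).det) + (R₁ - R₀).trace
        + (max (frobNorm R₀) (frobNorm R₁) / (1 - dbar)) * frobNorm (R₁ - R₀) := by
  classical
  have hH₀ : R₀.IsHermitian := by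
    rwa [Matrix.IsHermitian, Matrix.conjTranspose_eq_transpose_of_trivial]
  have hH₁ : R₁.IsHermitian := by
    rwa [Matrix.IsHermitian, Matrix.conjTranspose_eq_transpose_of_trivial]
  set V : Matrix (Fin d) (Fin d) ℝ := (hH₁.eigenvectorUnitary : Matrix (Fin d) (Fin d) ℝ)
    with hVdef
  set lam : Fin d → ℝ := hH₁.eigenvalues with hlamdef
  have hV1 : V * Vᴴ = 1 := unitary_VVh hH₁
  have hV2 : Vᴴ * V = 1 := unitary_VhV hH₁
  have hlam_le : ∀ i, |lam i| ≤ dbar := fun i => (eig_abs_le hH₁ i).trans hR₁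
  have h1db : (0:ℝ) < 1 - dbar := by linarith
  have h1lam_ge : ∀ i, 1 - dbar ≤ 1 - lam i := fun i => by
    have := (abs_le.mp (hlam_le i)).2; linarith
  have h1lam : ∀ i, 0 < 1 - lam i := fun i => lt_of_lt_of_le h1db (h1lam_ge i)
  set Δ : Matrix (Fin d) (Fin d) ℝ := R₁ - R₀ with hΔdef
  set A : Matrix (Fin d) (Fin d) ℝ := 1 - R₀ with hAdef
  set B : Matrix (Fin d) (Fin d) ℝ := 1 - R₁ with hBdef
  -- positive definiteness
  have hApd : A.PosDef := posDef_one_sub hH₀ (fun i => by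
    have := (abs_le.mp ((eig_abs_le hH₀ i).trans hR₀)).2; linarith)
  have hBpd : B.PosDef := posDef_one_sub hH₁ (fun i => by
    have := (abs_le.mp (hlam_le i)).2; linarith)
  have hBunit : IsUnit B.det := isUnit_iff_ne_zero.mpr hBpd.det_pos.ne'
  -- decompositions
  have hR1conj : R₁ = V * diagonal lam * Vᴴ := spectral_decomp hH₁
  have hBconj : B = V * diagonal (fun i => 1 - lam i) * Vᴴ := one_sub_decomp hH₁
  have hBinv : B⁻¹ = V * diagonal (fun i => (1 - lam i)⁻¹) * Vᴴ := by
    apply Matrix.inv_eq_right_inv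
    rw [hBconj, conj_mul_conj hV2]
    have he : (fun i => (1 - lam i) * (1 - lam i)⁻¹) = fun _ => (1:ℝ) := by
      funext i; exact mul_inv_cancel₀ (h1lam i).ne'
    rw [he, Matrix.diagonal_one, Matrix.mul_one, hV1]
  set C : Matrix (Fin d) (Fin d) ℝ := B⁻¹ * R₁ with hCdef
  have hCconj : C = V * diagonal (fun i => (1 - lam i)⁻¹ * lam i) * Vᴴ := by
    rw [hCdef, hBinv, hR1conj, conj_mul_conj hV2]
  have hCsym : Cᵀ = C := by
    rw [← Matrix.conjTranspose_eq_transpose_of_trivial, hCconj]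
    exact conj_herm _
  -- Frobenius norm bounds
  have hfrobR₁ : frobNorm R₁ = Real.sqrt (∑ i, lam i ^ 2) := by
    rw [hR1conj]; exact frobNorm_conj hV2 _
  have hfrobC : frobNorm C ≤ frobNorm R₁ / (1 - dbar) := by
    rw [hCconj, frobNorm_conj hV2, hfrobR₁]
    have hsum : ∑ i, ((1 - lam i)⁻¹ * lam i) ^ 2 ≤
        ((1 - dbar)⁻¹) ^ 2 * ∑ i, lam i ^ 2 := by
      rw [Finset.mul_sum]
      refine Finset.sum_le_sum fun i _ => ?_
      rw [mul_pow]
      apply mul_le_mul_of_nonneg_right _ (sq_nonneg _)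
      apply pow_le_pow_left₀ (inv_nonneg.mpr (h1lam i).le)
      exact inv_anti₀ h1db (h1lam_ge i)
    calc Real.sqrt (∑ i, ((1 - lam i)⁻¹ * lam i) ^ 2)
        ≤ Real.sqrt (((1 - dbar)⁻¹) ^ 2 * ∑ i, lam i ^ 2) := Real.sqrt_le_sqrt hsum
      _ = (1 - dbar)⁻¹ * Real.sqrt (∑ i, lam i ^ 2) := by
          rw [Real.sqrt_mul (sq_nonneg _), Real.sqrt_sq (by positivity)]
      _ = Real.sqrt (∑ i, lam i ^ 2) / (1 - dbar) := by
          rw [div_eq_mul_inv, mul_comm]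
  -- log det inequality via sqrt of B⁻¹
  have hBinvpd : B⁻¹.PosDef := hBpd.inv
  set S : Matrix (Fin d) (Fin d) ℝ :=
    V * diagonal (fun i => Real.sqrt ((1 - lam i)⁻¹)) * Vᴴ with hSdef
  have hSS : S * S = B⁻¹ := by
    rw [hSdef, conj_mul_conj hV2, hBinv]
    have he : (fun i => Real.sqrt ((1 - lam i)⁻¹) * Real.sqrt ((1 - lam i)⁻¹)) =
        fun i => (1 - lam i)⁻¹ := by
      funext i; exact Real.mul_self_sqrt (inv_nonneg.mpr (h1lam i).le)
    rw [he]
  have hSherm : Sᴴ = S := by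
    rw [hSdef]; exact conj_herm _
  have hSdet2 : S.det * S.det = B⁻¹.det := by rw [← Matrix.det_mul, hSS]
  have hBinvdet : B⁻¹.det = B.det⁻¹ := by
    rw [Matrix.det_nonsing_inv, Ring.inverse_eq_inv']
  have hSunit : IsUnit S.det := by
    rw [isUnit_iff_ne_zero]
    intro h
    rw [h, mul_zero] at hSdet2
    rw [hBinvdet] at hSdet2
    exact (inv_ne_zero hBpd.det_pos.ne') hSdet2.symm
  have hMpd : (S * A * S).PosDef := by
    have := posDef_conj' hApd hSunit
    rwa [hSherm] at this
  have hdetM : (S * A * S).det = A.det * B.det⁻¹ := by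
    rw [Matrix.det_mul, Matrix.det_mul]
    rw [← hBinvdet, ← hSdet2]; ring
  have htrM : (S * A * S).trace = (B⁻¹ * A).trace := by
    rw [Matrix.trace_mul_cycle, hSS]
  have key1 : Real.log A.det - Real.log B.det ≤ (B⁻¹ * A).trace - d := by
    have h := logdet_le_trace hMpd
    rw [hdetM, htrM] at h
    rwa [Real.log_mul hApd.det_pos.ne' (inv_ne_zero hBpd.det_pos.ne'),
      Real.log_inv] at h
  -- trace identity
  have hB1C : B⁻¹ = 1 + C := by
    have hBR : B + R₁ = 1 := by rw [hBdef]; abel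
    calc B⁻¹ = B⁻¹ * (B + R₁) := by rw [hBR, Matrix.mul_one]
      _ = 1 + C := by rw [Matrix.mul_add, Matrix.nonsing_inv_mul _ hBunit, hCdef]
  have hABΔ : A = B + Δ := by rw [hAdef, hBdef, hΔdef]; abel
  have key2 : (B⁻¹ * A).trace - d = Δ.trace + (C * Δ).trace := by
    have : B⁻¹ * A = 1 + (Δ + C * Δ) := by
      rw [hABΔ, Matrix.mul_add, Matrix.nonsing_inv_mul _ hBunit, hB1C,
        Matrix.add_mul, Matrix.one_mul]
    rw [this]
    simp [Matrix.trace_add, Matrix.trace_one]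
  -- Cauchy-Schwarz bound
  have hfrobΔ : 0 ≤ frobNorm Δ := Real.sqrt_nonneg _
  have key3 : (C * Δ).trace ≤
      (max (frobNorm R₀) (frobNorm R₁) / (1 - dbar)) * frobNorm Δ := by
    calc (C * Δ).trace ≤ frobNorm C * frobNorm Δ := trace_mul_le_frob hCsym
      _ ≤ (frobNorm R₁ / (1 - dbar)) * frobNorm Δ :=
          mul_le_mul_of_nonneg_right hfrobC hfrobΔ
      _ ≤ (max (frobNorm R₀) (frobNorm R₁) / (1 - dbar)) * frobNorm Δ := by
          have : frobNorm R₁ ≤ max (frobNorm R₀) (frobNorm R₁) := le_max_right _ _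
          gcongr
  linarith [key1, key2, key3]

end
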